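/- For q ≥ 4 and r ≥ 2, the monomial g(r,q) = (∏_{|A|≥1} y_A)(∏_{|A|≥3} y_A) ε_1^{r−2} does not belong to E_q^r. Equivalently, for every a = (a_1,…,a_q) ∈ ℕ^q with a_1+⋯+a_q = r, there exists a nonempty A ⊆ [q] such that the exponent of y_A in g(r,q) is strictly less than ∑_{i∈A} a_i. -/
import Mathlib

open MvPolynomial
open Pointwise

/-- Index type: nonempty subsets of `[q]`. -/
abbrev EIdx (q : ℕ) := {A : Finset (Fin q) // A.Nonempty}

/-- The generator `ε_i = ∏_{A ∋ i} y_A` of the extremal ideal. -/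
noncomputable def extGen (k : Type*) [Field k] (q : ℕ) (i : Fin q) :
    MvPolynomial (EIdx q) k :=
  ∏ A : EIdx q, if i ∈ A.1 then X A else 1

/-- The `q`-extremal ideal `E_q = (ε_1, …, ε_q)`. -/
noncomputable def extIdeal (k : Type*) [Field k] (q : ℕ) :
    Ideal (MvPolynomial (EIdx q) k) :=
  Ideal.span (Set.range (extGen k q))

/-- `g(r,q) = (∏_{|A| ≥ 1} y_A)(∏_{|A| ≥ 3} y_A) ε_1^{r-2}`. -/
noncomputable def gMon (k : Type*) [Field k] (q r : ℕ) (h0 : 0 < q) :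
    MvPolynomial (EIdx q) k :=
  (∏ A : EIdx q, X A) * (∏ A : EIdx q, if 3 ≤ A.1.card then X A else 1) *
    extGen k q ⟨0, h0⟩ ^ (r - 2)

/-! ### Auxiliary machinery -/

lemma prod_X_pow_univ {σ : Type*} [Fintype σ] {R : Type*} [CommSemiring R] (f : σ →₀ ℕ) :
    (∏ A : σ, (X A : MvPolynomial σ R) ^ f A) = monomial f 1 := by
  classical
  rw [← prod_X_pow_eq_monomial]
  exact (Finset.prod_subset (Finset.subset_univ _)
    (by intro x _ hx; simp [Finsupp.notMem_support_iff.mp hx])).symm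

lemma prod_monomial_one {σ ι : Type*} {R : Type*} [CommSemiring R] (s : Finset ι)
    (g : ι → (σ →₀ ℕ)) :
    (∏ i ∈ s, (monomial (g i) (1 : R))) = monomial (∑ i ∈ s, g i) 1 := by
  classical
  induction s using Finset.cons_induction with
  | empty => simp
  | cons a s ha ih => rw [Finset.prod_cons, Finset.sum_cons, ih, monomial_mul, one_mul]

/-- The exponent vector of `ε_i`. -/
noncomputable def muExp (q : ℕ) (i : Fin q) : (EIdx q) →₀ ℕ :=
  Finsupp.equivFunOnFinite.symm (fun A => if i ∈ A.1 then 1 else 0)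

lemma muExp_apply (q : ℕ) (i : Fin q) (A : EIdx q) :
    muExp q i A = if i ∈ A.1 then 1 else 0 := rfl

lemma extGen_eq (k : Type*) [Field k] (q : ℕ) (i : Fin q) :
    extGen k q i = monomial (muExp q i) (1 : k) := by
  rw [extGen, ← prod_X_pow_univ (muExp q i)]
  refine Finset.prod_congr rfl fun A _ => ?_
  rw [muExp_apply]
  split_ifs <;> [exact (pow_one _).symm; exact (pow_zero _).symm]

/-- The exponent vector of `g(r,q)`. -/
noncomputable def gExp (q r : ℕ) (h0 : 0 < q) : (EIdx q) →₀ ℕ :=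
  Finsupp.equivFunOnFinite.symm (fun A =>
    (if 3 ≤ A.1.card then 2 else 1) + (if (⟨0, h0⟩ : Fin q) ∈ A.1 then r - 2 else 0))

lemma gExp_apply (q r : ℕ) (h0 : 0 < q) (A : EIdx q) :
    gExp q r h0 A =
      (if 3 ≤ A.1.card then 2 else 1) + (if (⟨0, h0⟩ : Fin q) ∈ A.1 then r - 2 else 0) := rfl

lemma gMon_eq (k : Type*) [Field k] (q r : ℕ) (h0 : 0 < q) :
    gMon k q r h0 = monomial (gExp q r h0) (1 : k) := by
  classical
  have h1 : (∏ A : EIdx q, (X A : MvPolynomial (EIdx q) k)) =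
      monomial (Finsupp.equivFunOnFinite.symm (fun _ : EIdx q => 1)) 1 := by
    rw [← prod_X_pow_univ]
    exact Finset.prod_congr rfl fun A _ => by simp [Finsupp.equivFunOnFinite]
  have h2 : (∏ A : EIdx q, if 3 ≤ A.1.card then (X A : MvPolynomial (EIdx q) k) else 1) =
      monomial (Finsupp.equivFunOnFinite.symm
        (fun A : EIdx q => if 3 ≤ A.1.card then 1 else 0)) 1 := by
    rw [← prod_X_pow_univ]
    refine Finset.prod_congr rfl fun A _ => ?_
    have : (Finsupp.equivFunOnFinite.symm
        (fun A : EIdx q => if 3 ≤ A.1.card then 1 else 0)) A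
        = if 3 ≤ A.1.card then 1 else 0 := rfl
    rw [this]
    split_ifs <;> [exact (pow_one _).symm; exact (pow_zero _).symm]
  rw [gMon, h1, h2, extGen_eq, monomial_pow, monomial_mul, monomial_mul]
  rw [one_mul, one_mul, one_pow]
  have hD : ((Finsupp.equivFunOnFinite.symm fun _ : EIdx q => 1) +
      Finsupp.equivFunOnFinite.symm fun A : EIdx q => if 3 ≤ A.1.card then 1 else 0) +
      (r - 2) • muExp q ⟨0, h0⟩ = gExp q r h0 := by
    ext A
    rw [Finsupp.add_apply, Finsupp.add_apply, Finsupp.smul_apply, smul_eq_mul]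
    have e1 : (Finsupp.equivFunOnFinite.symm (fun _ : EIdx q => 1)) A = 1 := rfl
    have e2 : (Finsupp.equivFunOnFinite.symm
        (fun A : EIdx q => if 3 ≤ A.1.card then 1 else 0)) A
        = if 3 ≤ A.1.card then 1 else 0 := rfl
    rw [e1, e2, muExp_apply, gExp_apply]
    split_ifs <;> omega
  rw [hD]

/-- The combinatorial key lemma. -/
lemma key_lemma (q r : ℕ) (hq : 4 ≤ q) (hr : 2 ≤ r) (h0 : 0 < q) (a : Fin q → ℕ)
    (ha : (∑ i, a i) = r) :
    ∃ A : EIdx q,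
      ((if 3 ≤ A.1.card then 2 else 1) +
          (if (⟨0, h0⟩ : Fin q) ∈ A.1 then r - 2 else 0)) < ∑ i ∈ A.1, a i := by
  classical
  set z : Fin q := ⟨0, h0⟩ with hz
  by_cases h1 : ∃ i, i ≠ z ∧ 2 ≤ a i
  · obtain ⟨i, hiz, hi⟩ := h1
    refine ⟨⟨{i}, Finset.singleton_nonempty i⟩, ?_⟩
    show (if 3 ≤ ({i} : Finset (Fin q)).card then 2 else 1) +
        (if z ∈ ({i} : Finset (Fin q)) then r - 2 else 0) < ∑ m ∈ ({i} : Finset (Fin q)), a m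
    have hnz : z ∉ ({i} : Finset (Fin q)) := by simp [Ne.symm hiz]
    rw [Finset.card_singleton, Finset.sum_singleton, if_neg (by omega : ¬ (3:ℕ) ≤ 1),
      if_neg hnz]
    omega
  by_cases h2 : ∃ i j, i ≠ z ∧ j ≠ z ∧ i ≠ j ∧ 1 ≤ a i ∧ 1 ≤ a j
  · obtain ⟨i, j, hiz, hjz, hij, hi, hj⟩ := h2
    refine ⟨⟨{i, j}, Finset.insert_nonempty i {j}⟩, ?_⟩
    show (if 3 ≤ ({i, j} : Finset (Fin q)).card then 2 else 1) +
        (if z ∈ ({i, j} : Finset (Fin q)) then r - 2 else 0) <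
        ∑ m ∈ ({i, j} : Finset (Fin q)), a m
    have hnz : z ∉ ({i, j} : Finset (Fin q)) := by
      simp [Ne.symm hiz, Ne.symm hjz]
    rw [Finset.card_pair hij, Finset.sum_pair hij, if_neg (by omega : ¬ (3:ℕ) ≤ 2),
      if_neg hnz]
    omega
  by_cases h3 : ∃ i, i ≠ z ∧ 1 ≤ a i
  · obtain ⟨i, hiz, hi⟩ := h3
    refine ⟨⟨{z, i}, Finset.insert_nonempty z {i}⟩, ?_⟩
    show (if 3 ≤ ({z, i} : Finset (Fin q)).card then 2 else 1) +
        (if z ∈ ({z, i} : Finset (Fin q)) then r - 2 else 0) <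
        ∑ m ∈ ({z, i} : Finset (Fin q)), a m
    have hsum : (∑ m ∈ ({z, i} : Finset (Fin q)), a m) = r := by
      rw [← ha]
      refine Finset.sum_subset (Finset.subset_univ _) fun x _ hx => ?_
      simp only [Finset.mem_insert, Finset.mem_singleton, not_or] at hx
      by_contra hax
      exact h2 ⟨i, x, hiz, hx.1, fun h => hx.2 h.symm, hi, by omega⟩
    rw [Finset.card_pair (Ne.symm hiz), hsum, if_neg (by omega : ¬ (3:ℕ) ≤ 2),
      if_pos (Finset.mem_insert_self z {i})]
    omega
  · refine ⟨⟨{z}, Finset.singleton_nonempty z⟩, ?_⟩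
    show (if 3 ≤ ({z} : Finset (Fin q)).card then 2 else 1) +
        (if z ∈ ({z} : Finset (Fin q)) then r - 2 else 0) < ∑ m ∈ ({z} : Finset (Fin q)), a m
    have hsum : (∑ m ∈ ({z} : Finset (Fin q)), a m) = r := by
      rw [← ha]
      refine Finset.sum_subset (Finset.subset_univ _) fun x _ hx => ?_
      simp only [Finset.mem_singleton] at hx
      by_contra hax
      exact h3 ⟨x, hx, by omega⟩
    rw [Finset.card_singleton, hsum, if_neg (by omega : ¬ (3:ℕ) ≤ 1),
      if_pos (Finset.mem_singleton_self z)]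
    omega

/-- Coefficient vanishing in spans of monomial sets. -/
lemma coeff_zero_of_mem_span {σ : Type*} {k : Type*} [Field k] (T : Set (MvPolynomial σ k))
    (D : σ →₀ ℕ) (hT : ∀ t ∈ T, ∃ e : σ →₀ ℕ, t = monomial e 1 ∧ ¬ e ≤ D)
    {p : MvPolynomial σ k} (hp : p ∈ Ideal.span T) : coeff D p = 0 := by
  classical
  have main : ∀ c : MvPolynomial σ k, coeff D (c * p) = 0 := by
    refine Submodule.span_induction ?_ ?_ ?_ ?_ hp
    · intro t ht c
      obtain ⟨e, rfl, he⟩ := hT t ht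
      rw [coeff_mul_monomial', if_neg he]
    · intro c; simp
    · intro x y _ _ hx hy c
      rw [mul_add, coeff_add, hx c, hy c, add_zero]
    · intro a x _ hx c
      rw [smul_eq_mul, ← mul_assoc]
      exact hx (c * a)
  simpa using main 1

theorem stmt10 (k : Type*) [Field k] (q r : ℕ) (hq : 4 ≤ q) (hr : 2 ≤ r) :
    gMon k q r (by omega) ∉ (extIdeal k q) ^ r ∧
    -- equivalently: for every `a` with `∑ a_i = r`, the exponent of some `y_A`
    -- in `g(r,q)` is strictly less than `∑_{i ∈ A} a_i`
    (∀ a : Fin q → ℕ, (∑ i, a i) = r →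
      ∃ A : EIdx q,
        ((if 3 ≤ A.1.card then 2 else 1) +
            (if (⟨0, by omega⟩ : Fin q) ∈ A.1 then r - 2 else 0)) <
          ∑ i ∈ A.1, a i) := by
  classical
  have h0 : 0 < q := by omega
  constructor
  · intro hmem
    rw [extIdeal, Ideal.span, Submodule.span_pow] at hmem
    have hco : coeff (gExp q r h0) (gMon k q r h0) = 0 := by
      refine coeff_zero_of_mem_span _ _ ?_ hmem
      intro t ht
      rw [Set.mem_pow] at ht
      obtain ⟨f, hf⟩ := ht
      choose j hj using fun i => (f i).2
      have ht' : t = monomial (∑ i : Fin r, muExp q (j i)) (1 : k) := by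
        rw [← hf, List.prod_ofFn, ← prod_monomial_one]
        exact Finset.prod_congr rfl fun i _ => by rw [← extGen_eq, hj i]
      refine ⟨_, ht', ?_⟩
      set a : Fin q → ℕ := fun m => ∑ i : Fin r, if j i = m then 1 else 0 with haa
      have hsum : (∑ m, a m) = r := by
        rw [haa, Finset.sum_comm]
        simp
      obtain ⟨A, hA⟩ := key_lemma q r hq hr h0 a hsum
      intro hle
      have hle' := hle A
      have hEA : (∑ i : Fin r, muExp q (j i)) A = ∑ m ∈ A.1, a m := by
        rw [Finsupp.finset_sum_apply, haa, Finset.sum_comm]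
        refine Finset.sum_congr rfl fun i _ => ?_
        rw [muExp_apply, Finset.sum_ite_eq A.1 (j i) (fun _ => 1)]
      rw [hEA, gExp_apply] at hle'
      omega
    rw [gMon_eq, coeff_monomial, if_pos rfl] at hco
    exact one_ne_zero hco
  · exact fun a ha => key_lemma q r hq hr h0 a ha
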